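/- arXiv:math/0101219 — 3 statements merged into one kernel-verified Lean document; each statement's English description precedes it below -/
import Mathlib

section
/- Let C be a braided monoidal category with braiding β, A a commutative monoid object in C, and (X, μ_X) a module over A. Then the action μ_X : A ⊗ X ⟶ X coequalizes the two morphisms μ₁ = μ ⊗ id_X and μ₂ = (id_A ⊗ μ_X) ∘ (β_{A,A} ⊗ id_X) : A ⊗ A ⊗ X ⟶ A ⊗ X defining A ⊗_A X (with A regarded as a module over itself via μ), and the induced morphism A ⊗_A X ⟶ X from the coequalizer is an isomorphism of A-modules, with inverse π_{A,X} ∘ (ι ⊗ id_X) : X ≅ 𝟙 ⊗ X ⟶ A ⊗ X ⟶ A ⊗_A X. In particular A is a unit object for the tensor product ⊗_A on Mod A. -/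
open CategoryTheory MonoidalCategory Limits

universe v u

variable {C : Type u} [Category.{v} C] [MonoidalCategory C] [BraidedCategory C]

/-- The free module `F(V) = A ⊗ V` over a monoid object `A`, with action `μ ⊗ id_V`. -/
@[simps]
def freeMod (A : Mon C) (V : C) : Mod C A.X where
  X := A.X ⊗ V
  mod :=
  { smul := (α_ A.X A.X V).inv ≫ (MonObj.mul (X := A.X) ▷ V)
    one_smul := by
      dsimp only [selfLeftAction_actionHomLeft,
        selfLeftAction_actionObj]
      rw [associator_inv_naturality_left_assoc, ← comp_whiskerRight, MonObj.one_mul]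
      simp
    mul_smul := by
      dsimp only [selfLeftAction_actionHomLeft,
        selfLeftAction_actionHomRight,
        selfLeftAction_actionAssocIso,
        selfLeftAction_actionObj]
      simp only [MonoidalCategory.whiskerLeft_comp]
      slice_rhs 3 4 => rw [associator_inv_naturality_middle]
      rw [associator_inv_naturality_left_assoc, ← comp_whiskerRight, MonObj.mul_assoc]
      simp only [comp_whiskerRight, Category.assoc]
      monoidal }

/-- The first of the two morphisms whose coequalizer is `X ⊗_A Y`, namely `μ_X ⊗ id_Y`. -/
def mapOne {A : Mon C} (X Y : Mod C A.X) : (A.X ⊗ X.X) ⊗ Y.X ⟶ X.X ⊗ Y.X :=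
  ModObj.smul (M := A.X) (X := X.X) ▷ Y.X

/-- The second of the two morphisms whose coequalizer is `X ⊗_A Y`, namely
`(id_X ⊗ μ_Y) ∘ (β_{A,X} ⊗ id_Y)`. -/
def mapTwo {A : Mon C} (X Y : Mod C A.X) : (A.X ⊗ X.X) ⊗ Y.X ⟶ X.X ⊗ Y.X :=
  ((β_ A.X X.X).hom ▷ Y.X) ≫ (α_ X.X A.X Y.X).hom ≫ (X.X ◁ ModObj.smul (M := A.X) (X := Y.X))

variable [HasCoequalizers C]

/-- The underlying object of `X ⊗_A Y`: the coequalizer of `mapOne` and `mapTwo`. -/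
noncomputable def tensorQ {A : Mon C} (X Y : Mod C A.X) : C :=
  coequalizer (mapOne X Y) (mapTwo X Y)

/-- The canonical projection `π_{X,Y} : X ⊗ Y ⟶ X ⊗_A Y`. -/
noncomputable def tensorπ {A : Mon C} (X Y : Mod C A.X) : X.X ⊗ Y.X ⟶ tensorQ X Y :=
  coequalizer.π _ _

/-!
STATEMENT 2: For a commutative monoid object `A` in a braided category `C` and a module
`(X, μ_X)` over `A`, the action `μ_X` coequalizes the two morphisms defining `A ⊗_A X`,
and the induced morphism `A ⊗_A X ⟶ X` is an isomorphism of `A`-modules, with inverse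
`π ∘ (ι ⊗ id_X)`.  In particular `A` is a unit object for `⊗_A`.
-/

theorem regular_tensor_unit
    (A : Mon C) (hcomm : (β_ A.X A.X).hom ≫ MonObj.mul (X := A.X) = MonObj.mul (X := A.X))
    (X : Mod C A.X) :
    ∃ h : mapOne (Mod.regular A.X) X ≫ ModObj.smul (M := A.X) (X := X.X) = mapTwo (Mod.regular A.X) X ≫ ModObj.smul (M := A.X) (X := X.X),
      ∃ actQ : A.X ⊗ tensorQ (Mod.regular A.X) X ⟶ tensorQ (Mod.regular A.X) X,
        -- `actQ` is the action of `A` descended from the action on the first factor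
        ((A.X ◁ tensorπ (Mod.regular A.X) X) ≫ actQ
            = (α_ A.X A.X X.X).inv ≫ (MonObj.mul (X := A.X) ▷ X.X) ≫ tensorπ (Mod.regular A.X) X) ∧
        -- `actQ` satisfies the module axioms
        ((MonObj.one (X := A.X) ▷ tensorQ (Mod.regular A.X) X) ≫ actQ = (λ_ (tensorQ (Mod.regular A.X) X)).hom) ∧
        ((MonObj.mul (X := A.X) ▷ tensorQ (Mod.regular A.X) X) ≫ actQ
            = (α_ A.X A.X (tensorQ (Mod.regular A.X) X)).hom ≫ (A.X ◁ actQ) ≫ actQ) ∧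
        -- the morphism `A ⊗_A X ⟶ X` induced by `μ_X` on the coequalizer is a morphism of
        -- `A`-modules ...
        (actQ ≫ coequalizer.desc (ModObj.smul (M := A.X) (X := X.X)) h = (A.X ◁ coequalizer.desc (ModObj.smul (M := A.X) (X := X.X)) h) ≫ ModObj.smul (M := A.X) (X := X.X)) ∧
        -- ... and an isomorphism, with inverse `π_{A,X} ∘ (ι ⊗ id_X)`
        (coequalizer.desc (ModObj.smul (M := A.X) (X := X.X)) h
            ≫ ((λ_ X.X).inv ≫ (MonObj.one (X := A.X) ▷ X.X) ≫ tensorπ (Mod.regular A.X) X)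
          = 𝟙 (tensorQ (Mod.regular A.X) X)) ∧
        (((λ_ X.X).inv ≫ (MonObj.one (X := A.X) ▷ X.X) ≫ tensorπ (Mod.regular A.X) X)
            ≫ coequalizer.desc (ModObj.smul (M := A.X) (X := X.X)) h = 𝟙 X.X) := by
  have hbinv : (β_ A.X A.X).inv ≫ MonObj.mul (X := A.X) = MonObj.mul (X := A.X) := by
    rw [Iso.inv_comp_eq]; exact hcomm.symm
  have h : mapOne (Mod.regular A.X) X ≫ ModObj.smul (M := A.X) (X := X.X) = mapTwo (Mod.regular A.X) X ≫ ModObj.smul (M := A.X) (X := X.X) := by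
    change (MonObj.mul (X := A.X) ▷ X.X) ≫ ModObj.smul (M := A.X) (X := X.X) = ((β_ A.X A.X).hom ▷ X.X ≫ (α_ A.X A.X X.X).hom ≫ (A.X ◁ ModObj.smul (M := A.X) (X := X.X))) ≫ ModObj.smul (M := A.X) (X := X.X)
    simp only [Category.assoc]
    rw [← ModObj.mul_smul_self A.X X.X, ← comp_whiskerRight_assoc, hcomm]
  set π : A.X ⊗ X.X ⟶ tensorQ (Mod.regular A.X) X := tensorπ (Mod.regular A.X) X with hπdef
  set e : tensorQ (Mod.regular A.X) X ⟶ X.X := coequalizer.desc (ModObj.smul (M := A.X) (X := X.X)) h with hedef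
  have hππ : coequalizer.π (mapOne (Mod.regular A.X) X) (mapTwo (Mod.regular A.X) X) = π := rfl
  have hπe : π ≫ e = ModObj.smul (M := A.X) (X := X.X) := coequalizer.π_desc _ _
  have hco := coequalizer.condition (mapOne (Mod.regular A.X) X) (mapTwo (Mod.regular A.X) X)
  rw [hππ] at hco
  replace hco : (MonObj.mul (X := A.X) ▷ X.X) ≫ π = (β_ A.X A.X).hom ▷ X.X ≫ (α_ A.X A.X X.X).hom ≫ (A.X ◁ ModObj.smul (M := A.X) (X := X.X)) ≫ π := by
    refine hco.trans ?_
    show ((β_ A.X A.X).hom ▷ X.X ≫ (α_ A.X A.X X.X).hom ≫ (A.X ◁ ModObj.smul (M := A.X) (X := X.X))) ≫ π = _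
    simp only [Category.assoc]
  -- the coequalizer relation, rearranged
  have K : (A.X ◁ ModObj.smul (M := A.X) (X := X.X)) ≫ π = (α_ A.X A.X X.X).inv ≫ (MonObj.mul (X := A.X) ▷ X.X) ≫ π := by
    rw [← cancel_epi (α_ A.X A.X X.X).hom, Iso.hom_inv_id_assoc,
      ← cancel_epi ((β_ A.X A.X).hom ▷ X.X), ← comp_whiskerRight_assoc, hcomm]
    exact hco.symm
  -- the key identity: `ModObj.smul (M := A.X) (X := X.X)` followed by the candidate inverse is `π`
  have key : ModObj.smul (M := A.X) (X := X.X) ≫ (λ_ X.X).inv ≫ (MonObj.one (X := A.X) ▷ X.X) ≫ π = π := by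
    rw [leftUnitor_inv_naturality_assoc, whisker_exchange_assoc, K]
    dsimp only [selfLeftAction_actionObj]
    rw [associator_inv_naturality_left_assoc, leftUnitor_tensor_inv_assoc,
      Iso.hom_inv_id_assoc, ← comp_whiskerRight_assoc, ← comp_whiskerRight_assoc,
      Category.assoc, MonObj.one_mul, Iso.inv_hom_id, id_whiskerRight, Category.id_comp]
  have hie : ((λ_ X.X).inv ≫ (MonObj.one (X := A.X) ▷ X.X) ≫ π) ≫ e = 𝟙 X.X := by
    simp only [Category.assoc, hπe, ModObj.one_smul_self, Iso.inv_hom_id]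
  have hei : e ≫ ((λ_ X.X).inv ≫ (MonObj.one (X := A.X) ▷ X.X) ≫ π) = 𝟙 _ := by
    apply coequalizer.hom_ext
    change π ≫ e ≫ ((λ_ X.X).inv ≫ (MonObj.one (X := A.X) ▷ X.X) ≫ π) = π ≫ 𝟙 _
    rw [← Category.assoc, hπe]
    exact key.trans (Category.comp_id _).symm
  set i : X.X ⟶ tensorQ (Mod.regular A.X) X := (λ_ X.X).inv ≫ (MonObj.one (X := A.X) ▷ X.X) ≫ π with hidef
  have hacti : ModObj.smul (M := A.X) (X := X.X) ≫ i = π := key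
  refine ⟨h, (A.X ◁ e) ≫ ModObj.smul (M := A.X) (X := X.X) ≫ i, ?_, ?_, ?_, ?_, hei, hie⟩
  · change (A.X ◁ π) ≫ ((A.X ◁ e) ≫ ModObj.smul (M := A.X) (X := X.X) ≫ i) = (α_ A.X A.X X.X).inv ≫ (MonObj.mul (X := A.X) ▷ X.X) ≫ π
    rw [← MonoidalCategory.whiskerLeft_comp_assoc, hπe, ← hacti]
    simp only [← Category.assoc]
    rw [Category.assoc, Category.assoc, hacti, K]
    simp only [Category.assoc]
  · rw [← whisker_exchange_assoc, ModObj.one_smul_self_assoc, leftUnitor_naturality_assoc, hei,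
      Category.comp_id]
  · rw [← whisker_exchange_assoc, ModObj.mul_smul_self_assoc]
    simp only [MonoidalCategory.whiskerLeft_comp, Category.assoc]
    rw [← associator_naturality_right_assoc]
    congr 2
    simp only [hie, Category.comp_id, ← MonoidalCategory.whiskerLeft_comp_assoc]
  · simp only [← hedef, Category.assoc, hie, Category.comp_id]
    rfl
end

section
/- Let C be a ℂ-linear abelian braided monoidal category in which tensoring on either side with any object is exact, and in which every object is projective (e.g. C semisimple). Let A be a commutative rigid monoid object in C (Hom(𝟙, A) one-dimensional, nondegenerate pairing e_A = ε ∘ μ, dim A ≠ 0). Then every object of the abelian category Mod A is projective; consequently every short exact sequence in Mod A splits, i.e. Ext¹ vanishes in Mod A and A is a semisimple algebra. -/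
open CategoryTheory MonoidalCategory Limits

universe v u

/-!
STATEMENT 12: Let `C` be a ℂ-linear abelian braided monoidal category with biexact tensor
product in which every object is projective, and `A` a commutative rigid monoid object in
`C`.  Then every object of `Mod A` is projective; consequently every short exact sequence
in `Mod A` splits (every epimorphism admits a section), i.e. `Ext¹` vanishes and `A` is a
semisimple algebra.
-/

namespace RigidSemisimpleAux

variable {C : Type u} [Category.{v} C] [MonoidalCategory C]

/-- Recovery: contracting the transpose against the copairing recovers the morphism. -/
theorem recovery {a : C} (e : a ⊗ a ⟶ 𝟙_ C) (iA : 𝟙_ C ⟶ a ⊗ a)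
    (zag : (ρ_ a).inv ≫ (a ◁ iA) ≫ (α_ a a a).inv ≫ (e ▷ a) ≫ (λ_ a).hom = 𝟙 a)
    (m : a ⟶ a ⊗ a) :
    (ρ_ a).inv ≫ (a ◁ iA) ≫ (α_ a a a).inv ≫
      (((m ▷ a) ≫ (α_ a a a).hom ≫ (a ◁ e) ≫ (ρ_ a).hom) ▷ a) = m := by
  simp only [comp_whiskerRight, Category.assoc]
  rw [← associator_inv_naturality_left_assoc, whisker_exchange_assoc,
    ← rightUnitor_inv_naturality_assoc]
  calc m ≫ (ρ_ (a ⊗ a)).inv ≫ ((a ⊗ a) ◁ iA) ≫ (α_ (a ⊗ a) a a).inv ≫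
        ((α_ a a a).hom ▷ a) ≫ ((a ◁ e) ▷ a) ≫ ((ρ_ a).hom ▷ a)
      = m ≫ a ◁ ((ρ_ a).inv ≫ (a ◁ iA) ≫ (α_ a a a).inv ≫ (e ▷ a) ≫ (λ_ a).hom) := by
        congr 1
        monoidal
    _ = m := by rw [zag]; simp

/-- The transpose of `R` is the multiplication. -/
theorem thetaR {a : C} (mul : a ⊗ a ⟶ a) (e : a ⊗ a ⟶ 𝟙_ C) (iA : 𝟙_ C ⟶ a ⊗ a)
    (he : (mul ▷ a) ≫ e = (α_ a a a).hom ≫ (a ◁ mul) ≫ e)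
    (zig : (λ_ a).inv ≫ (iA ▷ a) ≫ (α_ a a a).hom ≫ (a ◁ e) ≫ (ρ_ a).hom = 𝟙 a) :
    ((((λ_ a).inv ≫ (iA ▷ a) ≫ (α_ a a a).hom ≫ (a ◁ mul)) ▷ a)
        ≫ (α_ a a a).hom ≫ (a ◁ e) ≫ (ρ_ a).hom) = mul := by
  simp only [comp_whiskerRight, Category.assoc]
  rw [associator_naturality_middle_assoc]
  slice_lhs 5 6 => rw [← MonoidalCategory.whiskerLeft_comp, he,
    MonoidalCategory.whiskerLeft_comp, MonoidalCategory.whiskerLeft_comp]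
  simp only [Category.assoc]
  calc (λ_ a).inv ▷ a ≫ (iA ▷ a) ▷ a ≫ (α_ a a a).hom ▷ a ≫ (α_ a (a ⊗ a) a).hom
        ≫ (a ◁ (α_ a a a).hom) ≫ (a ◁ (a ◁ mul)) ≫ (a ◁ e) ≫ (ρ_ a).hom
      = mul ≫ (λ_ a).inv ≫ (iA ▷ a) ≫ (α_ a a a).hom ≫ (a ◁ e) ≫ (ρ_ a).hom := by
        rw [leftUnitor_inv_naturality_assoc (f := mul), whisker_exchange_assoc,
          associator_naturality_right_assoc]
        monoidal
    _ = mul := by rw [zig]; simp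

/-- The Casimir ("Frobenius") identity for a rigid algebra. -/
theorem casimir {a : C} (mul : a ⊗ a ⟶ a) (e : a ⊗ a ⟶ 𝟙_ C) (iA : 𝟙_ C ⟶ a ⊗ a)
    (he : (mul ▷ a) ≫ e = (α_ a a a).hom ≫ (a ◁ mul) ≫ e)
    (zig : (λ_ a).inv ≫ (iA ▷ a) ≫ (α_ a a a).hom ≫ (a ◁ e) ≫ (ρ_ a).hom = 𝟙 a)
    (zag : (ρ_ a).inv ≫ (a ◁ iA) ≫ (α_ a a a).inv ≫ (e ▷ a) ≫ (λ_ a).hom = 𝟙 a) :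
    (ρ_ a).inv ≫ (a ◁ iA) ≫ (α_ a a a).inv ≫ (mul ▷ a)
      = (λ_ a).inv ≫ (iA ▷ a) ≫ (α_ a a a).hom ≫ (a ◁ mul) := by
  conv_lhs => rw [← thetaR mul e iA he zig]
  exact recovery e iA zag _

/-- Averaged morphism: first normalization. -/
theorem avg_left {a z y : C} (mul : a ⊗ a ⟶ a) (actZ : a ⊗ z ⟶ z) (actY : a ⊗ y ⟶ y)
    (iA : 𝟙_ C ⟶ a ⊗ a) (u : z ⟶ y)
    (hZ : (mul ▷ z) ≫ actZ = (α_ a a z).hom ≫ (a ◁ actZ) ≫ actZ) :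
    actZ ≫ (λ_ z).inv ≫ (iA ▷ z) ≫ (α_ a a z).hom ≫ (a ◁ (actZ ≫ u)) ≫ actY
      = (((λ_ a).inv ≫ (iA ▷ a) ≫ (α_ a a a).hom ≫ (a ◁ mul)) ▷ z) ≫ (α_ a a z).hom
          ≫ (a ◁ (actZ ≫ u)) ≫ actY := by
  rw [leftUnitor_inv_naturality_assoc, whisker_exchange_assoc]
  simp only [MonoidalCategory.whiskerLeft_comp, comp_whiskerRight, Category.assoc]
  rw [associator_naturality_right_assoc]
  slice_lhs 4 5 =>
    rw [show (a ◁ (a ◁ actZ)) ≫ (a ◁ actZ) = (a ◁ (α_ a a z).inv) ≫ (a ◁ (mul ▷ z)) ≫ (a ◁ actZ) by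
      simp only [← MonoidalCategory.whiskerLeft_comp]; rw [hZ]; simp]
  simp [← whisker_exchange_assoc, ← whisker_exchange]

/-- Averaged morphism: second normalization. -/
theorem avg_right {a z y : C} (mul : a ⊗ a ⟶ a) (actZ : a ⊗ z ⟶ z) (actY : a ⊗ y ⟶ y)
    (iA : 𝟙_ C ⟶ a ⊗ a) (u : z ⟶ y)
    (hY : (mul ▷ y) ≫ actY = (α_ a a y).hom ≫ (a ◁ actY) ≫ actY) :
    (a ◁ ((λ_ z).inv ≫ (iA ▷ z) ≫ (α_ a a z).hom ≫ (a ◁ (actZ ≫ u)) ≫ actY)) ≫ actY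
      = (((ρ_ a).inv ≫ (a ◁ iA) ≫ (α_ a a a).inv ≫ (mul ▷ a)) ▷ z) ≫ (α_ a a z).hom
          ≫ (a ◁ (actZ ≫ u)) ≫ actY := by
  simp only [MonoidalCategory.whiskerLeft_comp, comp_whiskerRight, Category.assoc]
  slice_lhs 6 7 =>
    rw [show (a ◁ actY) ≫ actY = (α_ a a y).inv ≫ (mul ▷ y) ≫ actY by rw [hY]; simp]
  simp [← whisker_exchange_assoc, ← whisker_exchange]
  slice_lhs 5 6 => rw [associator_inv_naturality_right]
  slice_lhs 4 5 => rw [associator_inv_naturality_right]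
  slice_lhs 6 7 => rw [whisker_exchange]
  slice_lhs 5 6 => rw [whisker_exchange]
  slice_rhs 5 6 => rw [associator_naturality_left]
  slice_lhs 3 4 =>
    rw [show (a ◁ (α_ a a z).hom) ≫ (α_ a a (a ⊗ z)).inv
        = (α_ a (a ⊗ a) z).inv ≫ ((α_ a a a).inv ▷ z) ≫ (α_ (a ⊗ a) a z).hom by coherence]
  simp

/-- The averaged morphism is a module map. -/
theorem avg_module {a z y : C} (mul : a ⊗ a ⟶ a) (actZ : a ⊗ z ⟶ z) (actY : a ⊗ y ⟶ y)
    (iA : 𝟙_ C ⟶ a ⊗ a) (u : z ⟶ y)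
    (hZ : (mul ▷ z) ≫ actZ = (α_ a a z).hom ≫ (a ◁ actZ) ≫ actZ)
    (hY : (mul ▷ y) ≫ actY = (α_ a a y).hom ≫ (a ◁ actY) ≫ actY)
    (cas : (ρ_ a).inv ≫ (a ◁ iA) ≫ (α_ a a a).inv ≫ (mul ▷ a)
      = (λ_ a).inv ≫ (iA ▷ a) ≫ (α_ a a a).hom ≫ (a ◁ mul)) :
    actZ ≫ ((λ_ z).inv ≫ (iA ▷ z) ≫ (α_ a a z).hom ≫ (a ◁ (actZ ≫ u)) ≫ actY)
      = (a ◁ ((λ_ z).inv ≫ (iA ▷ z) ≫ (α_ a a z).hom ≫ (a ◁ (actZ ≫ u)) ≫ actY)) ≫ actY := by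
  rw [avg_left mul actZ actY iA u hZ, avg_right mul actZ actY iA u hY, cas]

/-- Composing the averaged morphism with the projection. -/
theorem avg_comp {a z y : C} (mul : a ⊗ a ⟶ a) (actZ : a ⊗ z ⟶ z) (actY : a ⊗ y ⟶ y)
    (iA : 𝟙_ C ⟶ a ⊗ a) (s₀ : z ⟶ y) (gh : y ⟶ z)
    (hZ : (mul ▷ z) ≫ actZ = (α_ a a z).hom ≫ (a ◁ actZ) ≫ actZ)
    (hg : actY ≫ gh = (a ◁ gh) ≫ actZ) (hs : s₀ ≫ gh = 𝟙 z) :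
    ((λ_ z).inv ≫ (iA ▷ z) ≫ (α_ a a z).hom ≫ (a ◁ (actZ ≫ s₀)) ≫ actY) ≫ gh
      = (λ_ z).inv ≫ ((iA ≫ mul) ▷ z) ≫ actZ := by
  simp only [Category.assoc]
  rw [hg, ← MonoidalCategory.whiskerLeft_comp_assoc, Category.assoc actZ s₀ gh, hs,
    Category.comp_id]
  rw [show (α_ a a z).hom ≫ (a ◁ actZ) ≫ actZ = (mul ▷ z) ≫ actZ from hZ.symm]
  simp [comp_whiskerRight]

/-- Composition of the actions of two "elements" of the algebra. -/
theorem actEl_comp {a m : C} (mul : a ⊗ a ⟶ a) (act : a ⊗ m ⟶ m)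
    (hassoc : (mul ▷ m) ≫ act = (α_ a a m).hom ≫ (a ◁ act) ≫ act)
    (f g : 𝟙_ C ⟶ a) :
    ((λ_ m).inv ≫ (f ▷ m) ≫ act) ≫ (λ_ m).inv ≫ (g ▷ m) ≫ act
      = (λ_ m).inv ≫ ((f ≫ (λ_ a).inv ≫ (g ▷ a) ≫ mul) ▷ m) ≫ act := by
  rw [Category.assoc, Category.assoc, leftUnitor_inv_naturality_assoc,
    whisker_exchange_assoc]
  rw [show (a ◁ act) ≫ act = (α_ a a m).inv ≫ (mul ▷ m) ≫ act by
    rw [hassoc]; simp]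
  simp [← whisker_exchange_assoc, ← whisker_exchange]

/-- Left multiplication by the unit. -/
theorem one_mult_left {a : C} (one : 𝟙_ C ⟶ a) (mul : a ⊗ a ⟶ a)
    (mul_one : (a ◁ one) ≫ mul = (ρ_ a).hom) (f : 𝟙_ C ⟶ a) :
    one ≫ (λ_ a).inv ≫ (f ▷ a) ≫ mul = f := by
  rw [leftUnitor_inv_naturality_assoc, whisker_exchange_assoc, mul_one,
    rightUnitor_naturality, unitors_inv_equal, Iso.inv_hom_id_assoc]

/-- Right multiplication by the unit. -/
theorem one_mult_right {a : C} (one : 𝟙_ C ⟶ a) (mul : a ⊗ a ⟶ a)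
    (one_mul : (one ▷ a) ≫ mul = (λ_ a).hom) (g : 𝟙_ C ⟶ a) :
    one ≫ (ρ_ a).inv ≫ (a ◁ g) ≫ mul = g := by
  rw [rightUnitor_inv_naturality_assoc, ← whisker_exchange_assoc, one_mul,
    leftUnitor_naturality, unitors_equal, Iso.inv_hom_id_assoc]

/-- The two descriptions of multiplying two elements. -/
theorem mult_swap {a : C} (mul : a ⊗ a ⟶ a) (f g : 𝟙_ C ⟶ a) :
    g ≫ (λ_ a).inv ≫ (f ▷ a) ≫ mul = f ≫ (ρ_ a).inv ≫ (a ◁ g) ≫ mul := by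
  rw [leftUnitor_inv_naturality_assoc, whisker_exchange_assoc,
    rightUnitor_inv_naturality_assoc]
  rw [unitors_inv_equal]

end RigidSemisimpleAux

namespace CategoryTheory.Mod

variable {C : Type u} [Category.{v} C] [MonoidalCategory C] {A : C} [MonObj A]

abbrev act (M : Mod C A) : A ⊗ M.X ⟶ M.X := ModObj.smul (M := A) (X := M.X)

theorem one_act (M : Mod C A) : (MonObj.one ▷ M.X) ≫ M.act = (λ_ M.X).hom :=
  ModObj.one_smul_self A M.X

theorem assoc (M : Mod C A) :
    (MonObj.mul ▷ M.X) ≫ M.act = (α_ A A M.X).hom ≫ (A ◁ M.act) ≫ M.act :=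
  ModObj.mul_smul_self A M.X

theorem one_act_assoc (M : Mod C A) {W : C} (f : M.X ⟶ W) :
    (MonObj.one ▷ M.X) ≫ M.act ≫ f = (λ_ M.X).hom ≫ f := by
  rw [← Category.assoc, one_act]

theorem assoc_assoc (M : Mod C A) {W : C} (f : M.X ⟶ W) :
    (MonObj.mul ▷ M.X) ≫ M.act ≫ f = (α_ A A M.X).hom ≫ (A ◁ M.act) ≫ M.act ≫ f := by
  rw [← Category.assoc, assoc]; simp only [Category.assoc]

theorem Hom.act_hom {M N : Mod C A} (f : Hom M N) : M.act ≫ f.hom = (A ◁ f.hom) ≫ N.act :=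
  IsModHom.smul_hom (A := A) (f := f.hom)

end CategoryTheory.Mod

theorem rigid_algebra_semisimple
    {C : Type u} [Category.{v} C] [MonoidalCategory C] [BraidedCategory C]
    [Abelian C] [CategoryTheory.Linear ℂ C]
    [∀ X : C, PreservesFiniteLimits (tensorLeft X)]
    [∀ X : C, PreservesFiniteLimits (tensorRight X)]
    [∀ X : C, PreservesFiniteColimits (tensorLeft X)]
    [∀ X : C, PreservesFiniteColimits (tensorRight X)]
    (hproj : ∀ Z : C, Projective Z)
    (A : Mon C) (hcomm : (β_ A.X A.X).hom ≫ MonObj.mul (X := A.X) = MonObj.mul (X := A.X))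
    (h1 : Module.finrank ℂ (𝟙_ C ⟶ A.X) = 1)
    (ε : A.X ⟶ 𝟙_ C) (hε : MonObj.one (X := A.X) ≫ ε = 𝟙 (𝟙_ C))
    (iA : 𝟙_ C ⟶ A.X ⊗ A.X)
    (zig : (λ_ A.X).inv ≫ (iA ▷ A.X) ≫ (α_ A.X A.X A.X).hom ≫ (A.X ◁ (MonObj.mul (X := A.X) ≫ ε)) ≫
        (ρ_ A.X).hom = 𝟙 A.X)
    (zag : (ρ_ A.X).inv ≫ (A.X ◁ iA) ≫ (α_ A.X A.X A.X).inv ≫ ((MonObj.mul (X := A.X) ≫ ε) ▷ A.X) ≫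
        (λ_ A.X).hom = 𝟙 A.X)
    (d : ℂ) (hd : iA ≫ MonObj.mul (X := A.X) ≫ ε = d • 𝟙 (𝟙_ C)) (hd0 : d ≠ 0) :
    -- every module over `A` is projective ...
    (∀ X : Mod C A.X, Projective X) ∧
      -- ... hence every epimorphism of `A`-modules splits, i.e. every short exact
      -- sequence in `Mod A` splits
      (∀ (Y Z : Mod C A.X) (g : Y ⟶ Z), Epi g → ∃ s : Z ⟶ Y, s ≫ g = 𝟙 Z) := by
  -- the unit of the algebra is nonzero
  have hone_ne : (MonObj.one (X := A.X)) ≠ 0 := by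
    intro h
    rw [h, Limits.zero_comp] at hε
    have hzero : ∀ f : 𝟙_ C ⟶ A.X, f = 0 := fun f => by
      rw [← Category.id_comp f, ← hε, Limits.zero_comp]
    have : Subsingleton (𝟙_ C ⟶ A.X) := ⟨fun f g => by rw [hzero f, hzero g]⟩
    rw [Module.finrank_zero_of_subsingleton] at h1
    exact absurd h1 (by norm_num)
  have hid_ne : (𝟙 (𝟙_ C) : 𝟙_ C ⟶ 𝟙_ C) ≠ 0 := by
    intro h
    apply hone_ne
    rw [← Category.id_comp (MonObj.one (X := A.X)), h, Limits.zero_comp]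
  -- `iA ≫ (MonObj.mul (X := A.X))` is `d • (MonObj.one (X := A.X))`
  obtain ⟨c, hc⟩ := (finrank_eq_one_iff_of_nonzero' (MonObj.one (X := A.X)) hone_ne).mp h1 (iA ≫ (MonObj.mul (X := A.X)))
  have hcd : c = d := by
    have h2 : (c • (MonObj.one (X := A.X))) ≫ ε = d • 𝟙 (𝟙_ C) := by rw [hc, Category.assoc, hd]
    rw [Linear.smul_comp, hε] at h2
    exact smul_left_injective ℂ hid_ne h2
  have key : iA ≫ (MonObj.mul (X := A.X)) = d • (MonObj.one (X := A.X)) := by rw [← hc, hcd]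
  -- associativity of the pairing
  have he : ((MonObj.mul (X := A.X)) ▷ A.X) ≫ ((MonObj.mul (X := A.X)) ≫ ε) = (α_ A.X A.X A.X).hom ≫ (A.X ◁ (MonObj.mul (X := A.X))) ≫ ((MonObj.mul (X := A.X)) ≫ ε) := by
    rw [← Category.assoc, MonObj.mul_assoc A.X]
    simp only [Category.assoc]
  have cas := RigidSemisimpleAux.casimir (MonObj.mul (X := A.X)) ((MonObj.mul (X := A.X)) ≫ ε) iA he zig zag
  -- the splitting statement
  have main : ∀ (Y Z : Mod C A.X) (g : Y ⟶ Z), Epi g → ∃ s : Z ⟶ Y, s ≫ g = 𝟙 Z := by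
    intro Y Z g hepi
    -- Step 1: the underlying morphism is an epimorphism
    have hepi_hom : Epi g.hom := by
      set q := cokernel.π g.hom with hq
      have hw : ((tensorLeft A.X).map g.hom) ≫ (Z.act ≫ q) = 0 := by
        show (A.X ◁ g.hom) ≫ (Z.act ≫ q) = 0
        rw [← Category.assoc, ← g.act_hom, Category.assoc, cokernel.condition, comp_zero]
      let actQ : A.X ⊗ cokernel g.hom ⟶ cokernel g.hom :=
        (PreservesCokernel.iso (tensorLeft A.X) g.hom).hom ≫
          cokernel.desc ((tensorLeft A.X).map g.hom) (Z.act ≫ q) hw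
      have hkey : (A.X ◁ q) ≫ actQ = Z.act ≫ q := by
        show ((tensorLeft A.X).map q) ≫ actQ = Z.act ≫ q
        rw [← Category.assoc]
        rw [show (tensorLeft A.X).map q ≫ (PreservesCokernel.iso (tensorLeft A.X) g.hom).hom
            = cokernel.π ((tensorLeft A.X).map g.hom) by
          rw [hq]
          rw [← π_comp_cokernelComparison g.hom (tensorLeft A.X),
            ← PreservesCokernel.iso_inv, Category.assoc, Iso.inv_hom_id, Category.comp_id]]
        simp
      haveI hepiq : ∀ W : C, Epi (W ◁ q) := fun W => by
        have : Epi ((tensorLeft W).map q) := inferInstance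
        exact this
      letI : ModObj A.X (cokernel g.hom) :=
        { smul := actQ
          one_smul := by
            show ((MonObj.one (X := A.X)) ▷ _) ≫ actQ = (λ_ _).hom
            rw [← cancel_epi (𝟙_ C ◁ q)]
            rw [whisker_exchange_assoc, hkey, Mod.one_act_assoc]
            rw [leftUnitor_naturality]
          mul_smul := by
            show ((MonObj.mul (X := A.X)) ▷ _) ≫ actQ = (α_ _ _ _).hom ≫ (A.X ◁ actQ) ≫ actQ
            rw [← cancel_epi ((A.X ⊗ A.X) ◁ q)]
            rw [whisker_exchange_assoc, hkey]
            rw [Mod.assoc_assoc]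
            rw [associator_naturality_right_assoc]
            rw [← MonoidalCategory.whiskerLeft_comp_assoc, hkey,
              MonoidalCategory.whiskerLeft_comp_assoc, hkey] }
      let Q : Mod C A.X := ⟨cokernel g.hom⟩
      let pimod : Z ⟶ Q := Mod.Hom.mk' q hkey.symm
      haveI : (tensorLeft A.X).PreservesZeroMorphisms := inferInstance
      let zeromod : Z ⟶ Q := Mod.Hom.mk' 0 (by
        show Z.act ≫ 0 = (A.X ◁ (0 : Z.X ⟶ cokernel g.hom)) ≫ actQ
        rw [show (A.X ◁ (0 : Z.X ⟶ cokernel g.hom)) = 0 from (tensorLeft A.X).map_zero _ _]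
        simp)
      have hgz : g ≫ pimod = g ≫ zeromod := by
        apply Mod.hom_ext
        show g.hom ≫ q = g.hom ≫ 0
        rw [cokernel.condition, comp_zero]
      have : pimod = zeromod := (cancel_epi g).mp hgz
      have hq0 : q = 0 := congrArg Mod.Hom.hom this
      exact CategoryTheory.Abelian.epi_of_cokernel_π_eq_zero _ hq0
    -- Step 2: a section in `C`
    haveI := hproj Z.X
    haveI := hepi_hom
    set s₀ : Z.X ⟶ Y.X := Projective.factorThru (𝟙 Z.X) g.hom with hs₀def
    have hs₀ : s₀ ≫ g.hom = 𝟙 Z.X := Projective.factorThru_comp _ _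
    -- Step 3: the averaged section
    set t : Z.X ⟶ Y.X :=
      (λ_ Z.X).inv ≫ (iA ▷ Z.X) ≫ (α_ A.X A.X Z.X).hom ≫ (A.X ◁ (Z.act ≫ s₀)) ≫ Y.act with htdef
    have htmod : Z.act ≫ t = (A.X ◁ t) ≫ Y.act :=
      RigidSemisimpleAux.avg_module (MonObj.mul (X := A.X)) Z.act Y.act iA s₀ Z.assoc Y.assoc cas
    let tm : Z ⟶ Y := Mod.Hom.mk' t htmod
    have htg : t ≫ g.hom = (λ_ Z.X).inv ≫ ((iA ≫ (MonObj.mul (X := A.X))) ▷ Z.X) ≫ Z.act :=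
      RigidSemisimpleAux.avg_comp (MonObj.mul (X := A.X)) Z.act Y.act iA s₀ g.hom Z.assoc g.act_hom hs₀
    -- Step 4: the composite is invertible
    set h : Z.X ⟶ Z.X := (λ_ Z.X).inv ≫ ((iA ≫ (MonObj.mul (X := A.X))) ▷ Z.X) ≫ Z.act with hhdef
    set h' : Z.X ⟶ Z.X := (λ_ Z.X).inv ≫ ((d⁻¹ • (MonObj.one (X := A.X))) ▷ Z.X) ≫ Z.act with hh'def
    have hmult1 : (d⁻¹ • (MonObj.one (X := A.X))) ≫ (λ_ A.X).inv ≫ ((iA ≫ (MonObj.mul (X := A.X))) ▷ A.X) ≫ (MonObj.mul (X := A.X)) = (MonObj.one (X := A.X)) := by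
      rw [Linear.smul_comp, RigidSemisimpleAux.one_mult_left (MonObj.one (X := A.X)) (MonObj.mul (X := A.X)) (MonObj.mul_one A.X) (iA ≫ (MonObj.mul (X := A.X))), key,
        smul_smul, inv_mul_cancel₀ hd0, one_smul]
    have hmult2 : (iA ≫ (MonObj.mul (X := A.X))) ≫ (λ_ A.X).inv ≫ ((d⁻¹ • (MonObj.one (X := A.X))) ▷ A.X) ≫ (MonObj.mul (X := A.X)) = (MonObj.one (X := A.X)) := by
      rw [RigidSemisimpleAux.mult_swap (MonObj.mul (X := A.X)) (d⁻¹ • (MonObj.one (X := A.X))) (iA ≫ (MonObj.mul (X := A.X))), Linear.smul_comp,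
        RigidSemisimpleAux.one_mult_right (MonObj.one (X := A.X)) (MonObj.mul (X := A.X)) (MonObj.one_mul A.X) (iA ≫ (MonObj.mul (X := A.X))), key,
        smul_smul, inv_mul_cancel₀ hd0, one_smul]
    have hh'h : h' ≫ h = 𝟙 Z.X := by
      rw [hh'def, hhdef, RigidSemisimpleAux.actEl_comp (MonObj.mul (X := A.X)) Z.act Z.assoc _ _, hmult1]
      rw [Mod.one_act, Iso.inv_hom_id]
    have hhh' : h ≫ h' = 𝟙 Z.X := by
      rw [hh'def, hhdef, RigidSemisimpleAux.actEl_comp (MonObj.mul (X := A.X)) Z.act Z.assoc _ _, hmult2]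
      rw [Mod.one_act, Iso.inv_hom_id]
    haveI : IsIso h := ⟨h', hhh', hh'h⟩
    -- Step 5: the inverse is a module map
    have hact : Z.act ≫ h = (A.X ◁ h) ≫ Z.act := by
      have := (tm ≫ g).act_hom
      change Z.act ≫ (t ≫ g.hom) = (A.X ◁ (t ≫ g.hom)) ≫ Z.act at this
      rw [htg] at this
      exact this
    have hinvact : Z.act ≫ inv h = (A.X ◁ inv h) ≫ Z.act := by
      rw [show A.X ◁ inv h = inv (A.X ◁ h) by
        show (tensorLeft A.X).map (inv h) = inv ((tensorLeft A.X).map h)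
        rw [Functor.map_inv]]
      rw [IsIso.comp_inv_eq, Category.assoc, IsIso.eq_inv_comp]
      exact hact.symm
    let hm_inv : Z ⟶ Z := Mod.Hom.mk' (inv h) hinvact
    refine ⟨hm_inv ≫ tm, ?_⟩
    apply Mod.hom_ext
    show (inv h ≫ t) ≫ g.hom = 𝟙 Z.X
    rw [Category.assoc, htg]
    exact IsIso.inv_hom_id h
  refine ⟨?_, main⟩
  intro X
  constructor
  intro E X' f e he
  obtain ⟨s, hs⟩ := main E X' e he
  exact ⟨f ≫ s, by rw [Category.assoc, hs, Category.comp_id]⟩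
end

section
/- Let G be a finite group acting by ℂ-algebra automorphisms on a nonzero finite-dimensional commutative associative unital ℂ-algebra A, and suppose the only G-stable ideals of A are 0 and A. Then there exist a subgroup H ≤ G and a G-equivariant isomorphism of ℂ-algebras from A to the algebra of ℂ-valued functions on the coset space G⧸H (with pointwise operations and G acting by left translation). In particular A is reduced and is the algebra of functions on a transitive G-set. -/
/-!
STATEMENT 19: Let `G` be a finite group acting by ℂ-algebra automorphisms on a nonzero
finite-dimensional commutative associative unital ℂ-algebra `A`, and suppose the only
`G`-stable ideals of `A` are `0` and `A`.  Then there exist a subgroup `H ≤ G` and a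
`G`-equivariant isomorphism of ℂ-algebras from `A` to the algebra of ℂ-valued functions
on the coset space `G ⧸ H` (with pointwise operations and `G` acting by left
translation).
-/

section Aux

variable {G : Type*} [Group G] {A : Type*} [CommRing A] [Algebra ℂ A]
  (ρ : G →* (A ≃ₐ[ℂ] A)) (χ : A →ₐ[ℂ] ℂ)

private lemma rho_rho (x y : G) (a : A) : ρ x (ρ y a) = ρ (x * y) a := by
  rw [map_mul]; rfl

/-- The stabilizer of the character `χ`. -/
private def stabSubgroup : Subgroup G where
  carrier := {g | ∀ a, χ (ρ g⁻¹ a) = χ a}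
  one_mem' := by intro a; simp
  mul_mem' := by
    intro g h hg hh a
    have : ρ (g * h)⁻¹ a = ρ h⁻¹ (ρ g⁻¹ a) := by
      rw [rho_rho]; congr 1; group
    rw [this, hh, hg]
  inv_mem' := by
    intro g hg a
    have h1 := hg (ρ g a)
    rw [rho_rho] at h1
    simp only [inv_mul_cancel, map_one, AlgEquiv.one_apply] at h1
    simpa using h1.symm

private lemma stab_mem_iff (g : G) : g ∈ stabSubgroup ρ χ ↔ ∀ a, χ (ρ g⁻¹ a) = χ a :=
  Iff.rfl

private lemma key_wd (a : A) (g g' : G) (h : g⁻¹ * g' ∈ stabSubgroup ρ χ) :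
    χ (ρ g⁻¹ a) = χ (ρ g'⁻¹ a) := by
  have h1 := (stab_mem_iff ρ χ _).mp h (ρ g⁻¹ a)
  rw [rho_rho] at h1
  have h2 : (g⁻¹ * g')⁻¹ * g⁻¹ = g'⁻¹ := by group
  rw [h2] at h1
  exact h1.symm

/-- The evaluation algebra morphism `A → (G ⧸ H → ℂ)`. -/
private def Φalg : A →ₐ[ℂ] ((G ⧸ stabSubgroup ρ χ) → ℂ) where
  toFun a := fun c => Quotient.liftOn' c (fun g => χ (ρ g⁻¹ a)) (fun g g' h => by
    exact key_wd ρ χ a g g' (QuotientGroup.leftRel_apply.mp h))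
  map_one' := by
    funext c
    refine Quotient.inductionOn' c fun g => ?_
    show χ (ρ g⁻¹ 1) = 1
    rw [map_one, map_one]
  map_mul' x y := by
    funext c
    refine Quotient.inductionOn' c fun g => ?_
    show χ (ρ g⁻¹ (x * y)) = χ (ρ g⁻¹ x) * χ (ρ g⁻¹ y)
    rw [map_mul, map_mul]
  map_zero' := by
    funext c
    refine Quotient.inductionOn' c fun g => ?_
    show χ (ρ g⁻¹ 0) = 0
    rw [map_zero, map_zero]
  map_add' x y := by
    funext c
    refine Quotient.inductionOn' c fun g => ?_
    show χ (ρ g⁻¹ (x + y)) = χ (ρ g⁻¹ x) + χ (ρ g⁻¹ y)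
    rw [map_add, map_add]
  commutes' r := by
    funext c
    refine Quotient.inductionOn' c fun g => ?_
    show χ (ρ g⁻¹ (algebraMap ℂ A r)) = algebraMap ℂ ℂ r
    rw [AlgEquiv.commutes, AlgHom.commutes]

private lemma Φalg_mk (a : A) (g : G) :
    Φalg ρ χ a (QuotientGroup.mk g) = χ (ρ g⁻¹ a) := rfl

private lemma Φalg_equivariant (g : G) (a : A) (c : G ⧸ stabSubgroup ρ χ) :
    Φalg ρ χ (ρ g a) c = Φalg ρ χ a (g⁻¹ • c) := by
  refine Quotient.inductionOn' c fun g' => ?_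
  have hc : (g⁻¹ • (QuotientGroup.mk g' : G ⧸ stabSubgroup ρ χ)) =
      QuotientGroup.mk (g⁻¹ * g') := rfl
  rw [show (Quotient.mk'' g' : G ⧸ stabSubgroup ρ χ) = QuotientGroup.mk g' from rfl,
    hc, Φalg_mk, Φalg_mk, rho_rho]
  congr 2
  group

end Aux

theorem simple_G_algebra_is_functions_on_coset_space
    (G : Type*) [Group G] [Finite G]
    (A : Type*) [CommRing A] [Algebra ℂ A] [FiniteDimensional ℂ A] [Nontrivial A]
    (ρ : G →* (A ≃ₐ[ℂ] A))
    (hsimple : ∀ I : Ideal A, (∀ (g : G), ∀ x ∈ I, ρ g x ∈ I) → I = ⊥ ∨ I = ⊤) :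
    ∃ (H : Subgroup G) (φ : A ≃ₐ[ℂ] ((G ⧸ H) → ℂ)),
      ∀ (g : G) (x : A) (c : G ⧸ H), φ (ρ g x) c = φ x (g⁻¹ • c) := by
  classical
  -- Step 1: construct a character χ : A →ₐ[ℂ] ℂ from a maximal ideal.
  obtain ⟨m, hm⟩ := Ideal.exists_maximal A
  haveI := hm
  letI : Field (A ⧸ m) := Ideal.Quotient.field m
  haveI : FiniteDimensional ℂ (A ⧸ m) := Module.Finite.quotient ℂ m
  haveI : Algebra.IsIntegral ℂ (A ⧸ m) := Algebra.IsIntegral.of_finite ℂ _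
  have hsurj0 : Function.Surjective (algebraMap ℂ (A ⧸ m)) :=
    IsAlgClosed.algebraMap_bijective_of_isIntegral.2
  have hinj0 : Function.Injective (algebraMap ℂ (A ⧸ m)) :=
    (algebraMap ℂ (A ⧸ m)).injective
  let e : ℂ ≃ₐ[ℂ] (A ⧸ m) :=
    AlgEquiv.ofBijective (Algebra.ofId ℂ (A ⧸ m)) ⟨hinj0, hsurj0⟩
  let χ : A →ₐ[ℂ] ℂ := e.symm.toAlgHom.comp (Ideal.Quotient.mkₐ ℂ m)
  -- Step 2: the subgroup and the evaluation map.
  set H := stabSubgroup ρ χ with hH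
  set φ₀ := Φalg ρ χ with hφ₀
  haveI : Nonempty (G ⧸ H) := ⟨QuotientGroup.mk 1⟩
  -- Step 3: injectivity.
  have hker_stable : ∀ (g : G), ∀ x ∈ RingHom.ker (φ₀ : A →+* ((G ⧸ H) → ℂ)),
      ρ g x ∈ RingHom.ker (φ₀ : A →+* ((G ⧸ H) → ℂ)) := by
    intro g x hx
    rw [RingHom.mem_ker] at hx ⊢
    funext c
    have h1 := Φalg_equivariant ρ χ g x c
    have h2 : Φalg ρ χ x (g⁻¹ • c) = 0 := congrFun hx (g⁻¹ • c)
    show Φalg ρ χ (ρ g x) c = 0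
    rw [h1, h2]
  have hker : RingHom.ker (φ₀ : A →+* ((G ⧸ H) → ℂ)) = ⊥ := by
    rcases hsimple _ hker_stable with h | h
    · exact h
    · exfalso
      have h1 : (1 : A) ∈ RingHom.ker (φ₀ : A →+* ((G ⧸ H) → ℂ)) := h ▸ Submodule.mem_top
      rw [RingHom.mem_ker, map_one] at h1
      exact one_ne_zero (congrFun h1 (QuotientGroup.mk 1))
  have hinj : Function.Injective φ₀ := by
    rwa [← RingHom.injective_iff_ker_eq_bot] at hker
  -- Step 4: surjectivity via linear independence of characters.
  haveI : Fintype (G ⧸ H) := Fintype.ofFinite _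
  -- the characters, as monoid homs
  let F : (G ⧸ H) → (A →* ℂ) := fun c =>
    ((Pi.evalRingHom (fun _ : G ⧸ H => ℂ) c).comp (φ₀ : A →+* ((G ⧸ H) → ℂ))).toMonoidHom
  have hF : ∀ c a, F c a = φ₀ a c := fun _ _ => rfl
  have hFinj : Function.Injective F := by
    intro c c' hcc'
    refine Quotient.inductionOn₂' c c' (fun g g' h => ?_) hcc'
    have heval : ∀ a : A, χ (ρ g⁻¹ a) = χ (ρ g'⁻¹ a) := by
      intro a
      exact congrFun (congrArg (fun (f : A →* ℂ) => (f : A → ℂ)) h) a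
    have : g⁻¹ * g' ∈ H := by
      rw [hH, stab_mem_iff]
      intro a
      have h1 := heval (ρ g a)
      rw [rho_rho, rho_rho, inv_mul_cancel, map_one, AlgEquiv.one_apply] at h1
      have h2 : (g⁻¹ * g')⁻¹ = g'⁻¹ * g := by group
      rw [h2]
      exact h1.symm
    exact Quotient.sound' (QuotientGroup.leftRel_apply.mpr this)
  have hLI : LinearIndependent ℂ (fun c => (F c : A → ℂ)) :=
    (linearIndependent_monoidHom A ℂ).comp F hFinj
  have hsurj : Function.Surjective φ₀ := by
    have : LinearMap.range (φ₀.toLinearMap) = ⊤ := by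
      by_contra hne
      obtain ⟨ψ, hψ0, hψker⟩ :=
        (LinearMap.range φ₀.toLinearMap).exists_le_ker_of_lt_top (lt_top_iff_ne_top.mpr hne)
      -- ψ is determined by its values on the standard basis
      have hψ : ∀ f : (G ⧸ H) → ℂ, ψ f = ∑ c, f c * ψ (Pi.single c 1) := by
        intro f
        conv_lhs => rw [← Finset.univ_sum_single f]
        rw [map_sum]
        refine Finset.sum_congr rfl fun c _ => ?_
        have : (Pi.single c (f c) : (G ⧸ H) → ℂ) = f c • (Pi.single c 1 : (G ⧸ H) → ℂ) := by
          rw [← Pi.single_smul, smul_eq_mul, mul_one]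
        rw [this, map_smul, smul_eq_mul]
      have hsum : (∑ c, ψ ((Pi.single c 1 : (G ⧸ H) → ℂ)) • (F c : A → ℂ)) = 0 := by
        funext a
        have hmem : φ₀ a ∈ LinearMap.ker ψ := hψker ⟨a, rfl⟩
        have h0 : ψ (φ₀ a) = 0 := hmem
        rw [hψ] at h0
        simpa [hF, Finset.sum_apply, mul_comm] using h0
      have hy := Fintype.linearIndependent_iff.mp hLI (fun c => ψ (Pi.single c 1)) hsum
      apply hψ0
      refine LinearMap.ext fun f => ?_
      rw [hψ f]
      simp only [LinearMap.zero_apply]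
      refine Finset.sum_eq_zero fun c _ => ?_
      have h := hy c
      rw [h, mul_zero]
    intro f
    have : f ∈ LinearMap.range φ₀.toLinearMap := this ▸ Submodule.mem_top
    obtain ⟨a, ha⟩ := this
    exact ⟨a, ha⟩
  -- Step 5: assemble.
  refine ⟨H, AlgEquiv.ofBijective φ₀ ⟨hinj, hsurj⟩, fun g x c => ?_⟩
  show φ₀ (ρ g x) c = φ₀ x (g⁻¹ • c)
  exact Φalg_equivariant ρ χ g x c
end
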